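/- For every natural number n ≥ 1 there exists a residue r with 0 ≤ r < 2^{σ_n} such that every natural number x > 1 with x ≡ r (mod 2^{σ_n}) has a finite stopping time equal to σ_n. -/

import Mathlib

/-- The 3x+1 map: `T x = x/2` if `x` is even, `(3x+1)/2` if `x` is odd. -/
def T (x : ℕ) : ℕ := if x % 2 = 0 then x / 2 else (3 * x + 1) / 2

/-- The stopping time of `x`: the least `s ≥ 1` with `T^[s] x < x`. -/
noncomputable def stoppingTime (x : ℕ) : ℕ := sInf {s : ℕ | 1 ≤ s ∧ T^[s] x < x}

/-- `σ_n = ⌊1 + (n+1)·log₂ 3⌋`. -/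
noncomputable def sigmaN (n : ℕ) : ℕ := ⌊1 + ((n : ℝ) + 1) * Real.logb 2 3⌋₊


lemma T_evenf (a : ℕ) : T (2 * a) = a := by
  unfold T; rw [if_pos (by omega)]; omega

lemma T_odd' (w : ℕ) (h : w % 2 = 1) : T w = (3 * w + 1) / 2 := by
  unfold T; rw [if_neg (by omega)]

lemma T_oddf (a : ℕ) (ha : 0 < a) : T (2 * a - 1) = 3 * a - 1 := by
  rw [T_odd' _ (by omega)]; omega

lemma iter_odd (k : ℕ) : ∀ m : ℕ, 0 < m → T^[k] (2 ^ k * m - 1) = 3 ^ k * m - 1 := by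
  induction k with
  | zero => intro m hm; simp
  | succ k ih =>
    intro m hm
    rw [Function.iterate_succ_apply]
    have h1 : 2 ^ (k + 1) * m - 1 = 2 * (2 ^ k * m) - 1 := by ring_nf
    have hpos : 0 < 2 ^ k * m := by positivity
    rw [h1, T_oddf _ hpos]
    have h2 : 3 * (2 ^ k * m) - 1 = 2 ^ k * (3 * m) - 1 := by ring_nf
    rw [h2, ih (3 * m) (by omega)]
    have : 3 ^ k * (3 * m) = 3 ^ (k + 1) * m := by ring
    rw [this]

lemma iter_even (k : ℕ) (t : ℕ) : T^[k] (2 ^ k * t) = t := by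
  induction k with
  | zero => simp
  | succ k ih =>
    rw [Function.iterate_succ_apply]
    have h1 : 2 ^ (k + 1) * t = 2 * (2 ^ k * t) := by ring
    rw [h1, T_evenf, ih]

lemma pow23 : ∀ N : ℕ, 2 ≤ N → 2 ^ (N + 1) < 3 ^ N := by
  intro N hN
  induction N with
  | zero => omega
  | succ k ih =>
    rcases Nat.lt_or_ge k 2 with hk | hk
    · interval_cases k
      · exact absurd hN (by norm_num)
      · norm_num
    · have := ih (by omega)
      have h1 : 2 ^ (k + 1 + 1) = 2 * 2 ^ (k + 1) := by ring
      have h2 : 3 ^ (k + 1) = 3 * 3 ^ k := by ring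
      omega

lemma mod8_3pow (N : ℕ) : 3 ^ N % 8 = 1 ∨ 3 ^ N % 8 = 3 := by
  induction N with
  | zero => left; rfl
  | succ k ih =>
    have : 3 ^ (k + 1) = 3 * 3 ^ k := by ring
    rcases ih with h | h <;> [right; left] <;> omega



lemma sigma_facts (n : ℕ) (hn : 1 ≤ n) :
    3 ^ (n + 1) < 2 ^ sigmaN n ∧ 2 ^ (sigmaN n - 1) < 3 ^ (n + 1) := by
  have hb : (2 : ℝ) ^ Real.logb 2 3 = 3 :=
    Real.rpow_logb (by norm_num) (by norm_num) (by norm_num)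
  have hβpos : 0 < Real.logb 2 3 := Real.logb_pos (by norm_num) (by norm_num)
  have hnn : (0 : ℝ) ≤ 1 + ((n : ℝ) + 1) * Real.logb 2 3 := by positivity
  have h1 : (sigmaN n : ℝ) ≤ 1 + ((n : ℝ) + 1) * Real.logb 2 3 := Nat.floor_le hnn
  have h2 : 1 + ((n : ℝ) + 1) * Real.logb 2 3 < (sigmaN n : ℝ) + 1 :=
    Nat.lt_floor_add_one _
  have hσ1 : 1 ≤ sigmaN n := by
    rw [sigmaN]
    exact Nat.le_floor (by push_cast; nlinarith)
  -- real pow identities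
  have e3 : ((3 : ℕ) ^ (n + 1) : ℝ) = (2 : ℝ) ^ (((n : ℝ) + 1) * Real.logb 2 3) := by
    push_cast
    rw [mul_comm, Real.rpow_mul (by norm_num), hb]
    rw [← Real.rpow_natCast ((3:ℝ)) (n+1)]
    push_cast
    ring_nf
  constructor
  · have hlt : ((n : ℝ) + 1) * Real.logb 2 3 < (sigmaN n : ℝ) := by linarith
    have : ((3 : ℕ) ^ (n + 1) : ℝ) < ((2 : ℕ) ^ sigmaN n : ℝ) := by
      rw [e3]
      push_cast
      rw [← Real.rpow_natCast (2 : ℝ) (sigmaN n)]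
      exact (Real.rpow_lt_rpow_left_iff (by norm_num)).2 hlt
    exact_mod_cast this
  · have hle : 2 ^ (sigmaN n - 1) ≤ 3 ^ (n + 1) := by
      have hcast : ((sigmaN n - 1 : ℕ) : ℝ) = (sigmaN n : ℝ) - 1 := by
        push_cast [Nat.cast_sub hσ1]; ring
      have hexp : ((sigmaN n - 1 : ℕ) : ℝ) ≤ ((n : ℝ) + 1) * Real.logb 2 3 := by
        rw [hcast]; linarith
      have : ((2 : ℕ) ^ (sigmaN n - 1) : ℝ) ≤ ((3 : ℕ) ^ (n + 1) : ℝ) := by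
        rw [e3]
        push_cast
        rw [← Real.rpow_natCast (2 : ℝ) (sigmaN n - 1)]
        exact (Real.rpow_le_rpow_left_iff (by norm_num)).2 hexp
      exact_mod_cast this
    have hne : 2 ^ (sigmaN n - 1) ≠ 3 ^ (n + 1) := by
      intro h
      rcases Nat.eq_zero_or_pos (sigmaN n - 1) with h0 | h0
      · rw [h0, pow_zero] at h
        have : 3 ^ 1 ≤ 3 ^ (n + 1) := Nat.pow_le_pow_right (by norm_num) (by omega)
        omega
      · have ho : 3 ^ (n + 1) % 2 = 1 := by rw [Nat.pow_mod]; norm_num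
        have he : 2 ^ (sigmaN n - 1) % 2 = 0 := by
          have h3 : sigmaN n - 1 = (sigmaN n - 2) + 1 := by omega
          rw [h3, pow_succ]; omega
        omega
    omega

lemma classA (N E m : ℕ) (hN : 1 ≤ N) (hE : 1 ≤ E) (hm : 0 < m)
    (hmod : 3 ^ N * m % 2 ^ E = 1)
    (hlow : 2 ^ (N + E - 1) < 3 ^ N) (hhigh : 3 ^ N < 2 ^ (N + E))
    (hne : (2 ^ (N + E) - 3 ^ N) * m ≠ 2 ^ E - 1) :
    (∀ s, 1 ≤ s → s < N + E → 2 ^ N * m - 1 ≤ T^[s] (2 ^ N * m - 1)) ∧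
      T^[N + E] (2 ^ N * m - 1) < 2 ^ N * m - 1 := by
  -- t with 3^N*m - 1 = 2^E * t
  obtain ⟨t, ht⟩ : ∃ t, 3 ^ N * m - 1 = 2 ^ E * t := by
    refine ⟨3 ^ N * m / 2 ^ E, ?_⟩
    have := Nat.div_add_mod (3 ^ N * m) (2 ^ E)
    omega
  have h3m : 1 ≤ 3 ^ N * m := by
    have : 0 < 3 ^ N * m := by positivity
    omega
  -- iterate values at N + j for j ≤ E
  have hiter : ∀ j, j ≤ E → T^[N + j] (2 ^ N * m - 1) = 2 ^ (E - j) * t := by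
    intro j hj
    rw [Nat.add_comm, Function.iterate_add_apply, iter_odd N m hm, ht]
    have : 2 ^ E * t = 2 ^ j * (2 ^ (E - j) * t) := by
      rw [← mul_assoc, ← pow_add]
      congr 2
      omega
    rw [this, iter_even]
  constructor
  · intro s hs1 hs2
    rcases le_or_gt s N with hsN | hsN
    · -- odd phase
      have hx : 2 ^ N * m - 1 = 2 ^ s * (2 ^ (N - s) * m) - 1 := by
        rw [← mul_assoc, ← pow_add]
        congr 3
        omega
      rw [hx, iter_odd s _ (by positivity)]
      have hmono : 2 ^ N * m ≤ 3 ^ s * (2 ^ (N - s) * m) := by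
        calc 2 ^ N * m = 2 ^ s * (2 ^ (N - s) * m) := by
              rw [← mul_assoc, ← pow_add]; congr 2; omega
          _ ≤ 3 ^ s * (2 ^ (N - s) * m) :=
              Nat.mul_le_mul_right _ (Nat.pow_le_pow_left (by norm_num) s)
      omega
    · -- even phase, s = N + j, 1 ≤ j ≤ E - 1
      set j := s - N with hj
      have hj1 : 1 ≤ j := by omega
      have hjE : j ≤ E - 1 := by omega
      have hs : s = N + j := by omega
      rw [hs, hiter j (by omega)]
      -- show 2^N*m - 1 ≤ 2^(E-j)*t
      have key : 2 ^ j * (2 ^ N * m - 1) ≤ 2 ^ j * (2 ^ (E - j) * t) := by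
        have he : 2 ^ j * (2 ^ (E - j) * t) = 2 ^ E * t := by
          rw [← mul_assoc, ← pow_add]; congr 2; omega
        rw [he, ← ht]
        -- 2^j * (2^N*m - 1) ≤ 3^N*m - 1
        have h2 : 2 ^ (N + j) ≤ 2 ^ (N + E - 1) :=
          Nat.pow_le_pow_right (by norm_num) (by omega)
        have h3 : 2 ^ (N + j) * m + m ≤ 3 ^ N * m := by
          have hc : 2 ^ (N + j) + 1 ≤ 3 ^ N := by omega
          calc 2 ^ (N + j) * m + m = (2 ^ (N + j) + 1) * m := by ring
            _ ≤ 3 ^ N * m := Nat.mul_le_mul_right _ hc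
        calc 2 ^ j * (2 ^ N * m - 1) ≤ 2 ^ j * (2 ^ N * m) := by
              exact Nat.mul_le_mul_left _ (Nat.sub_le _ _)
          _ = 2 ^ (N + j) * m := by rw [← mul_assoc, ← pow_add]; ring_nf
          _ ≤ 3 ^ N * m - 1 := by omega
      exact Nat.le_of_mul_le_mul_left key (by positivity)
  · -- final step
    have hfin : T^[N + E] (2 ^ N * m - 1) = t := by
      have := hiter E le_rfl
      simpa using this
    rw [hfin]
    -- t < 2^N*m - 1
    have h1 : 2 ^ E * t < 2 ^ E * (2 ^ N * m) := by
      rw [← ht]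
      have : 2 ^ E * (2 ^ N * m) = 2 ^ (N + E) * m := by
        rw [← mul_assoc, ← pow_add]; ring_nf
      rw [this]
      have : 3 ^ N * m < 2 ^ (N + E) * m := (Nat.mul_lt_mul_right hm).mpr hhigh
      omega
    have h2 : t < 2 ^ N * m := Nat.lt_of_mul_lt_mul_left h1
    -- rule out t = 2^N*m - 1
    have h3 : t ≠ 2 ^ N * m - 1 := by
      intro heq
      apply hne
      rw [Nat.sub_mul]
      have e1 : 2 ^ E * t = 2 ^ E * (2 ^ N * m) - 2 ^ E := by
        rw [heq, Nat.mul_sub]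
        ring_nf
      have e2 : 2 ^ E * (2 ^ N * m) = 2 ^ (N + E) * m := by
        rw [← mul_assoc, ← pow_add]; ring_nf
      have e3 : 3 ^ N * m ≤ 2 ^ (N + E) * m :=
        Nat.mul_le_mul_right _ (le_of_lt hhigh)
      have e4 : 2 ^ E ≤ 2 ^ (N + E) * m := by
        calc 2 ^ E ≤ 2 ^ (N + E) := Nat.pow_le_pow_right (by norm_num) (by omega)
          _ ≤ 2 ^ (N + E) * m := Nat.le_mul_of_pos_right _ hm
      omega
    omega

lemma classB (M E u : ℕ) (hM : 2 ≤ M) (hE : 2 ≤ E) (hu : 0 < u)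
    (hmod : 3 ^ (M + 1) * u % 2 ^ (E + 1) = 1)
    (hlow : 2 ^ (M + E) < 3 ^ (M + 1)) (hhigh : 3 ^ (M + 1) < 2 ^ (M + 1 + E))
    (hne : (2 ^ (M + 1 + E) - 3 ^ (M + 1)) * u ≠ 2 ^ (E + 1) - 1) :
    (∀ s, 1 ≤ s → s < M + 1 + E → 2 ^ M * u - 1 ≤ T^[s] (2 ^ M * u - 1)) ∧
      T^[M + 1 + E] (2 ^ M * u - 1) < 2 ^ M * u - 1 := by
  obtain ⟨t, ht⟩ : ∃ t, 3 ^ (M + 1) * u - 1 = 2 ^ (E + 1) * t := by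
    refine ⟨3 ^ (M + 1) * u / 2 ^ (E + 1), ?_⟩
    have := Nat.div_add_mod (3 ^ (M + 1) * u) (2 ^ (E + 1))
    omega
  have hsucc : 3 ^ (M + 1) * u = 3 * (3 ^ M * u) := by rw [pow_succ]; ring
  have h8 : 3 ^ M * u % 8 = 3 := by
    have hd : (8 : ℕ) ∣ 2 ^ (E + 1) := by
      have h3 : (2 : ℕ) ^ 3 ∣ 2 ^ (E + 1) := pow_dvd_pow 2 (by omega)
      norm_num at h3
      exact h3
    have h81 := Nat.mod_mod_of_dvd (3 ^ (M + 1) * u) hd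
    rw [hmod] at h81
    omega
  obtain ⟨w, hw1, hw2⟩ : ∃ w, 3 ^ M * u - 1 = 2 * w ∧ w % 2 = 1 :=
    ⟨(3 ^ M * u - 1) / 2, by omega, by omega⟩
  have hyM : T^[M] (2 ^ M * u - 1) = 3 ^ M * u - 1 := iter_odd M u hu
  have hyM1 : T^[M + 1] (2 ^ M * u - 1) = w := by
    rw [Function.iterate_succ_apply', hyM, hw1, T_evenf]
  have he2 : 2 ^ (E + 1) * t = 2 * (2 ^ E * t) := by rw [pow_succ]; ring
  have hw3 : 3 * w + 1 = 2 ^ E * t := by omega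
  have hyM2 : T^[M + 2] (2 ^ M * u - 1) = 2 ^ (E - 1) * t := by
    have : M + 2 = (M + 1) + 1 := rfl
    rw [this, Function.iterate_succ_apply', hyM1, T_odd' w hw2]
    have heE : 2 ^ E * t = 2 * (2 ^ (E - 1) * t) := by
      rw [← mul_assoc]
      congr 1
      rw [← pow_succ']
      congr 1
      omega
    omega
  have hiter2 : ∀ j, j ≤ E - 1 → T^[M + 2 + j] (2 ^ M * u - 1) = 2 ^ (E - 1 - j) * t := by
    intro j hj
    rw [show M + 2 + j = j + (M + 2) by omega, Function.iterate_add_apply, hyM2]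
    rw [show 2 ^ (E - 1) * t = 2 ^ j * (2 ^ (E - 1 - j) * t) by
      rw [← mul_assoc, ← pow_add]; congr 2; omega]
    exact iter_even j _
  constructor
  · intro s hs1 hs2
    rcases le_or_gt s M with hsM | hsM
    · have hx : 2 ^ M * u - 1 = 2 ^ s * (2 ^ (M - s) * u) - 1 := by
        rw [← mul_assoc, ← pow_add]
        congr 3
        omega
      rw [hx, iter_odd s _ (by positivity)]
      have hmono : 2 ^ M * u ≤ 3 ^ s * (2 ^ (M - s) * u) := by
        calc 2 ^ M * u = 2 ^ s * (2 ^ (M - s) * u) := by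
              rw [← mul_assoc, ← pow_add]; congr 2; omega
          _ ≤ 3 ^ s * (2 ^ (M - s) * u) :=
              Nat.mul_le_mul_right _ (Nat.pow_le_pow_left (by norm_num) s)
      omega
    · rcases Nat.eq_or_lt_of_le hsM with hs | hs
      · -- s = M + 1
        rw [← hs, hyM1]
        have h23 : 2 ^ (M + 1) ≤ 3 ^ M := le_of_lt (pow23 M hM)
        have hAB : 2 ^ (M + 1) * u ≤ 3 ^ M * u := Nat.mul_le_mul_right _ h23
        have e : 2 * (2 ^ M * u) = 2 ^ (M + 1) * u := by rw [pow_succ]; ring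
        omega
      · -- s = M + 2 + j
        set j := s - M - 2 with hj
        have hjE : j ≤ E - 2 := by omega
        have hseq : s = M + 2 + j := by omega
        rw [hseq, hiter2 j (by omega)]
        have key : 2 ^ (j + 2) * (2 ^ M * u - 1) ≤ 2 ^ (j + 2) * (2 ^ (E - 1 - j) * t) := by
          have he : 2 ^ (j + 2) * (2 ^ (E - 1 - j) * t) = 2 ^ (E + 1) * t := by
            rw [← mul_assoc, ← pow_add]; congr 2; omega
          rw [he, ← ht]
          have h2 : 2 ^ (M + j + 2) ≤ 2 ^ (M + E) :=
            Nat.pow_le_pow_right (by norm_num) (by omega)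
          have h3 : 2 ^ (M + j + 2) * u + u ≤ 3 ^ (M + 1) * u := by
            have hc : 2 ^ (M + j + 2) + 1 ≤ 3 ^ (M + 1) := by omega
            calc 2 ^ (M + j + 2) * u + u = (2 ^ (M + j + 2) + 1) * u := by ring
              _ ≤ 3 ^ (M + 1) * u := Nat.mul_le_mul_right _ hc
          calc 2 ^ (j + 2) * (2 ^ M * u - 1) ≤ 2 ^ (j + 2) * (2 ^ M * u) :=
                Nat.mul_le_mul_left _ (Nat.sub_le _ _)
            _ = 2 ^ (M + j + 2) * u := by rw [← mul_assoc, ← pow_add]; ring_nf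
            _ ≤ 3 ^ (M + 1) * u - 1 := by omega
        exact Nat.le_of_mul_le_mul_left key (by positivity)
  · have hfin : T^[M + 1 + E] (2 ^ M * u - 1) = t := by
      have h := hiter2 (E - 1) le_rfl
      rw [show M + 2 + (E - 1) = M + 1 + E by omega] at h
      rw [h, show E - 1 - (E - 1) = 0 by omega, pow_zero, one_mul]
    rw [hfin]
    have h1 : 2 ^ (E + 1) * t < 2 ^ (E + 1) * (2 ^ M * u) := by
      rw [← ht]
      have e2 : 2 ^ (E + 1) * (2 ^ M * u) = 2 ^ (M + 1 + E) * u := by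
        rw [← mul_assoc, ← pow_add]; ring_nf
      rw [e2]
      have : 3 ^ (M + 1) * u < 2 ^ (M + 1 + E) * u := (Nat.mul_lt_mul_right hu).mpr hhigh
      omega
    have h2 : t < 2 ^ M * u := Nat.lt_of_mul_lt_mul_left h1
    have h3 : t ≠ 2 ^ M * u - 1 := by
      intro heq
      apply hne
      rw [Nat.sub_mul]
      have e1 : 2 ^ (E + 1) * t = 2 ^ (E + 1) * (2 ^ M * u) - 2 ^ (E + 1) := by
        rw [heq, Nat.mul_sub]
        ring_nf
      have e2 : 2 ^ (E + 1) * (2 ^ M * u) = 2 ^ (M + 1 + E) * u := by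
        rw [← mul_assoc, ← pow_add]; ring_nf
      have e3 : 3 ^ (M + 1) * u ≤ 2 ^ (M + 1 + E) * u :=
        Nat.mul_le_mul_right _ (le_of_lt hhigh)
      have e4 : 2 ^ (E + 1) ≤ 2 ^ (M + 1 + E) * u := by
        calc 2 ^ (E + 1) ≤ 2 ^ (M + 1 + E) := Nat.pow_le_pow_right (by norm_num) (by omega)
          _ ≤ 2 ^ (M + 1 + E) * u := Nat.le_mul_of_pos_right _ hu
      omega
    omega

theorem stmt0 :
    ∀ n : ℕ, 1 ≤ n → ∃ r : ℕ, r < 2 ^ sigmaN n ∧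
      ∀ x : ℕ, 1 < x → x % 2 ^ sigmaN n = r →
        (∃ s : ℕ, 1 ≤ s ∧ T^[s] x < x) ∧ stoppingTime x = sigmaN n := by
  intro n hn
  obtain ⟨hhigh, hlow⟩ := sigma_facts n hn
  set σ := sigmaN n with hσdef
  set N := n + 1 with hNdef
  have hN2 : 2 ≤ N := by omega
  have h23 : 2 ^ (N + 1) < 3 ^ N := pow23 N hN2
  have hσN : N + 2 ≤ σ := by
    have h1 : 2 ^ (N + 1) < 2 ^ σ := lt_trans h23 hhigh
    have h2 : N + 1 < σ := by
      by_contra hcon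
      push_neg at hcon
      have := Nat.pow_le_pow_right (show 0 < 2 by norm_num) hcon
      omega
    omega
  set E := σ - N with hEdef
  have hσE : σ = N + E := by omega
  have hE2 : 2 ≤ E := by omega
  clear_value σ N E
  rw [hσE] at hhigh
  rw [show σ - 1 = N + E - 1 by omega] at hlow
  have h1ltE : 1 < 2 ^ E := by
    calc 1 < 2 ^ 1 := by norm_num
      _ ≤ 2 ^ E := Nat.pow_le_pow_right (by norm_num) (by omega)
  have h1ltE1 : 1 < 2 ^ (E + 1) := by
    calc 1 < 2 ^ 1 := by norm_num
      _ ≤ 2 ^ (E + 1) := Nat.pow_le_pow_right (by norm_num) (by omega)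
  have hcop : Nat.Coprime (3 ^ N) (2 ^ E) :=
    Nat.Coprime.pow _ _ (by norm_num)
  obtain ⟨b, -, hb⟩ := Nat.exists_mul_mod_eq_one_of_coprime hcop h1ltE
  set m₀ := b % 2 ^ E with hm₀def
  have hm₀lt : m₀ < 2 ^ E := Nat.mod_lt _ (by positivity)
  clear_value m₀
  have hm₀mod : 3 ^ N * m₀ % 2 ^ E = 1 := by
    have h1 : 3 ^ N * m₀ % 2 ^ E = 3 ^ N * b % 2 ^ E := by
      rw [hm₀def, Nat.mul_mod, Nat.mod_mod_of_dvd b dvd_rfl, ← Nat.mul_mod]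
    rw [h1, hb]
  have hm₀pos : 0 < m₀ := by
    rcases Nat.eq_zero_or_pos m₀ with h | h
    · rw [h, mul_zero, Nat.zero_mod] at hm₀mod; omega
    · exact h
  have hd1 : 1 ≤ 2 ^ (N + E) - 3 ^ N := by omega
  by_cases hbad : (2 ^ (N + E) - 3 ^ N) * m₀ = 2 ^ E - 1
  · -- bad case : use the classB residue
    have hN3 : 3 ≤ N := by
      by_contra h
      have hN2' : N = 2 := by omega
      have h9 : (3 : ℕ) ^ N = 9 := by rw [hN2']; norm_num
      have hE2' : E = 2 := by
        have hup : N + E - 1 ≤ 3 := by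
          by_contra hu
          push_neg at hu
          have h4 : 2 ^ 4 ≤ 2 ^ (N + E - 1) :=
            Nat.pow_le_pow_right (by norm_num) (by omega)
          norm_num at h4
          omega
        omega
      have hp4 : (2 : ℕ) ^ (N + E) = 16 := by rw [hN2', hE2']; norm_num
      have hp2 : (2 : ℕ) ^ E = 4 := by rw [hE2']; norm_num
      rw [hp4, h9, hp2] at hbad
      norm_num at hbad
      omega
    set M := N - 1 with hMdef
    have hMN : N = M + 1 := by omega
    clear_value M
    have hM2 : 2 ≤ M := by omega
    obtain ⟨b', -, hb'⟩ := Nat.exists_mul_mod_eq_one_of_coprime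
      (Nat.Coprime.pow _ _ (by norm_num) : Nat.Coprime (3 ^ N) (2 ^ (E + 1))) h1ltE1
    set u₀ := b' % 2 ^ (E + 1) with hu₀def
    have hu₀lt : u₀ < 2 ^ (E + 1) := Nat.mod_lt _ (by positivity)
    clear_value u₀
    have hu₀mod : 3 ^ N * u₀ % 2 ^ (E + 1) = 1 := by
      have h1 : 3 ^ N * u₀ % 2 ^ (E + 1) = 3 ^ N * b' % 2 ^ (E + 1) := by
        rw [hu₀def, Nat.mul_mod, Nat.mod_mod_of_dvd b' dvd_rfl, ← Nat.mul_mod]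
      rw [h1, hb']
    have hu₀pos : 0 < u₀ := by
      rcases Nat.eq_zero_or_pos u₀ with h | h
      · rw [h, mul_zero, Nat.zero_mod] at hu₀mod; omega
      · exact h
    have heE1 : 2 ^ (E + 1) = 2 * 2 ^ E := by rw [pow_succ]; ring
    refine ⟨2 ^ M * u₀ - 1, ?_, ?_⟩
    · have h1 : 2 ^ M * u₀ ≤ 2 ^ M * 2 ^ (E + 1) :=
        Nat.mul_le_mul_left _ (le_of_lt hu₀lt)
      have h2 : 2 ^ M * 2 ^ (E + 1) = 2 ^ σ := by
        rw [← pow_add, show M + (E + 1) = σ by omega]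
      have h3 : 0 < 2 ^ M * u₀ := by positivity
      omega
    · intro x hx1 hx2
      have hxd := Nat.div_add_mod x (2 ^ σ)
      rw [hx2] at hxd
      set k := x / 2 ^ σ with hkdef
      clear_value k
      set u := u₀ + 2 ^ (E + 1) * k with hudef
      have hu1 : 0 < u := by
        have : u₀ ≤ u := by rw [hudef]; omega
        omega
      have hxm : x = 2 ^ M * u - 1 := by
        have e1 : 2 ^ M * u = 2 ^ M * u₀ + 2 ^ σ * k := by
          rw [hudef, Nat.mul_add, ← mul_assoc, ← pow_add,
            show M + (E + 1) = σ by omega]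
        have h3 : 0 < 2 ^ M * u₀ := by positivity
        omega
      have hmodu : 3 ^ N * u % 2 ^ (E + 1) = 1 := by
        have e1 : 3 ^ N * u = 3 ^ N * u₀ + 2 ^ (E + 1) * (3 ^ N * k) := by
          rw [hudef]; ring
        rw [e1, Nat.add_mul_mod_self_left]
        exact hu₀mod
      have hneu : (2 ^ (N + E) - 3 ^ N) * u ≠ 2 ^ (E + 1) - 1 := by
        intro h
        have hle : u ≤ (2 ^ (N + E) - 3 ^ N) * u := Nat.le_mul_of_pos_left _ hd1
        have hk0 : k = 0 := by
          by_contra hk0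
          have h2 : 2 ^ (E + 1) ≤ 2 ^ (E + 1) * k := Nat.le_mul_of_pos_right _ (by omega)
          omega
        have huu : u = u₀ := by rw [hudef, hk0, mul_zero, add_zero]
        rw [huu] at h
        -- now h : d * u₀ = 2^(E+1) - 1 and hbad : d * m₀ = 2^E - 1
        have hu₀E : 3 ^ N * u₀ % 2 ^ E = 1 := by
          have hdvd : (2 : ℕ) ^ E ∣ 2 ^ (E + 1) := pow_dvd_pow 2 (by omega)
          have h2 := Nat.mod_mod_of_dvd (3 ^ N * u₀) hdvd
          rw [hu₀mod] at h2
          rw [← h2]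
          exact Nat.mod_eq_of_lt h1ltE
        have hcong : u₀ % 2 ^ E = m₀ % 2 ^ E := by
          have h1 : 3 ^ N * u₀ ≡ 3 ^ N * m₀ [MOD 2 ^ E] := by
            show 3 ^ N * u₀ % 2 ^ E = 3 ^ N * m₀ % 2 ^ E
            rw [hu₀E, hm₀mod]
          exact Nat.ModEq.cancel_left_of_coprime
            (Nat.Coprime.pow _ _ (by norm_num) : Nat.Coprime (2 ^ E) (3 ^ N)) h1
        have hm₀m : m₀ % 2 ^ E = m₀ := Nat.mod_eq_of_lt hm₀lt
        obtain ⟨q, hq⟩ : ∃ q, u₀ = 2 ^ E * q + m₀ := by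
          have hqe := Nat.div_add_mod u₀ (2 ^ E)
          rw [hcong, hm₀m] at hqe
          exact ⟨u₀ / 2 ^ E, hqe.symm⟩
        have hq1 : q ≤ 1 := by
          by_contra hq2
          push_neg at hq2
          have h2q : 2 ^ E * 2 ≤ 2 ^ E * q := Nat.mul_le_mul_left _ hq2
          omega
        have hcases : u₀ = m₀ ∨ u₀ = m₀ + 2 ^ E := by
          rcases Nat.le_one_iff_eq_zero_or_eq_one.mp hq1 with h0 | h0
          · left; rw [h0, mul_zero] at hq; omega
          · right; rw [h0, mul_one] at hq; omega
        rcases hcases with hc | hc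
        · rw [hc] at h; omega
        · have e1 : (2 ^ (N + E) - 3 ^ N) * u₀ =
              (2 ^ (N + E) - 3 ^ N) * m₀ + (2 ^ (N + E) - 3 ^ N) * 2 ^ E := by
            rw [hc]; ring
          have hd2 : (2 ^ (N + E) - 3 ^ N) * 2 ^ E = 1 * 2 ^ E := by omega
          have hd3 : 2 ^ (N + E) - 3 ^ N = 1 :=
            Nat.eq_of_mul_eq_mul_right (by positivity) hd2
          have h8 := mod8_3pow N
          have e3 : 2 ^ (N + E) = 8 * 2 ^ (N + E - 3) := by
            rw [show (8 : ℕ) = 2 ^ 3 by norm_num, ← pow_add]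
            congr 1
            omega
          omega
      have hlowB : 2 ^ (M + E) < 3 ^ (M + 1) := by
        rw [← hMN]
        rw [show M + E = N + E - 1 by omega]
        exact hlow
      have hhighB : 3 ^ (M + 1) < 2 ^ (M + 1 + E) := by
        rw [← hMN]
        exact hhigh
      have hmodB : 3 ^ (M + 1) * u % 2 ^ (E + 1) = 1 := by rw [← hMN]; exact hmodu
      have hneB : (2 ^ (M + 1 + E) - 3 ^ (M + 1)) * u ≠ 2 ^ (E + 1) - 1 := by
        rw [← hMN]; exact hneu
      obtain ⟨hpart1, hpart2⟩ := classB M E u hM2 hE2 hu1 hmodB hlowB hhighB hneB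
      have hσM : σ = M + 1 + E := by omega
      constructor
      · exact ⟨σ, by omega, by rw [hxm, hσM]; exact hpart2⟩
      · have hmem : σ ∈ {s : ℕ | 1 ≤ s ∧ T^[s] x < x} :=
          ⟨by omega, by rw [hxm, hσM]; exact hpart2⟩
        have hlb : ∀ s ∈ {s : ℕ | 1 ≤ s ∧ T^[s] x < x}, σ ≤ s := by
          rintro s ⟨hs1, hs2⟩
          by_contra hcon
          push_neg at hcon
          have h := hpart1 s hs1 (by omega)
          rw [← hxm] at h
          omega
        exact IsLeast.csInf_eq ⟨hmem, hlb⟩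
  · -- good case : use the classA residue
    refine ⟨2 ^ N * m₀ - 1, ?_, ?_⟩
    · have h1 : 2 ^ N * m₀ ≤ 2 ^ N * 2 ^ E := Nat.mul_le_mul_left _ (le_of_lt hm₀lt)
      have h2 : 2 ^ N * 2 ^ E = 2 ^ σ := by rw [← pow_add, ← hσE]
      have h3 : 0 < 2 ^ N * m₀ := by positivity
      omega
    · intro x hx1 hx2
      have hxd := Nat.div_add_mod x (2 ^ σ)
      rw [hx2] at hxd
      set k := x / 2 ^ σ with hkdef
      clear_value k
      set m := m₀ + 2 ^ E * k with hmdef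
      have hm1 : 0 < m := by
        have : m₀ ≤ m := by rw [hmdef]; omega
        omega
      have hxm : x = 2 ^ N * m - 1 := by
        have e1 : 2 ^ N * m = 2 ^ N * m₀ + 2 ^ σ * k := by
          rw [hmdef, Nat.mul_add, ← mul_assoc, ← pow_add,
            show N + E = σ by omega]
        have h3 : 0 < 2 ^ N * m₀ := by positivity
        omega
      have hmodm : 3 ^ N * m % 2 ^ E = 1 := by
        have e1 : 3 ^ N * m = 3 ^ N * m₀ + 2 ^ E * (3 ^ N * k) := by
          rw [hmdef]; ring
        rw [e1, Nat.add_mul_mod_self_left]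
        exact hm₀mod
      have hnem : (2 ^ (N + E) - 3 ^ N) * m ≠ 2 ^ E - 1 := by
        intro h
        have hle : m ≤ (2 ^ (N + E) - 3 ^ N) * m := Nat.le_mul_of_pos_left _ hd1
        have hk0 : k = 0 := by
          by_contra hk0
          have h2 : 2 ^ E ≤ 2 ^ E * k := Nat.le_mul_of_pos_right _ (by omega)
          omega
        apply hbad
        have huu : m = m₀ := by rw [hmdef, hk0, mul_zero, add_zero]
        rw [← huu]
        exact h
      obtain ⟨hpart1, hpart2⟩ :=
        classA N E m (by omega) (by omega) hm1 hmodm hlow hhigh hnem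
      constructor
      · exact ⟨σ, by omega, by rw [hxm, hσE]; exact hpart2⟩
      · have hmem : σ ∈ {s : ℕ | 1 ≤ s ∧ T^[s] x < x} :=
          ⟨by omega, by rw [hxm, hσE]; exact hpart2⟩
        have hlb : ∀ s ∈ {s : ℕ | 1 ≤ s ∧ T^[s] x < x}, σ ≤ s := by
          rintro s ⟨hs1, hs2⟩
          by_contra hcon
          push_neg at hcon
          have h := hpart1 s hs1 (by omega)
          rw [← hxm] at h
          omega
        exact IsLeast.csInf_eq ⟨hmem, hlb⟩
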